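/- In the setting of the universal regular conditional distribution corollary (i.e., with K_ε ⊆ X compact, X_#ℙ(K_ε) ≥ 1−ε, and max_{x∈K_ε} W₁(ℙ^Y_x, Σ_{n=1}^N (Softmax_N(f̂(φ(x))))_n μ̂_n) ≤ ε): for every Borel-measurable function f : Y × X → ℝ which is uniformly Lipschitz in its first argument (there is L > 0 with |f(y₁,x) − f(y₂,x)| ≤ L·d_Y(y₁,y₂) for all x, y₁, y₂) and uniformly bounded (sup_{(y,x)} |f(y,x)| < ∞), it holds ℙ-almost surely for every x ∈ K_ε that | E[f(Y,X) | X = x] − ∫_Y f(y,x) d( Σ_{n=1}^N (Softmax_N(f̂(φ(x))))_n μ̂_n )(y) | ≤ M·ε, where M > 0 is a constant independent of ε, K_ε, N, and the measures μ̂₁,…,μ̂_N. -/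

import Mathlib

open MeasureTheory ENNReal

noncomputable section

/-- `ℝ^d` with the Euclidean norm. -/
abbrev Euc (d : ℕ) : Type := EuclideanSpace ℝ (Fin d)

/-- The Wasserstein-1 distance (with values in `ℝ≥0∞`) between two Borel measures on a
metric space: the infimum over all couplings of the expected distance. -/
def W1 {Y : Type*} [MeasurableSpace Y] [PseudoMetricSpace Y] (μ ν : Measure Y) : ℝ≥0∞ :=
  ⨅ (π : Measure (Y × Y)) (_ : π.map Prod.fst = μ) (_ : π.map Prod.snd = ν),
    ∫⁻ p, edist p.1 p.2 ∂π

/-- `μ ∈ P₁(Y)`: a Borel probability measure with finite first moment. -/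
def MemP1 {Y : Type*} [MeasurableSpace Y] [PseudoMetricSpace Y] (μ : Measure Y) : Prop :=
  IsProbabilityMeasure μ ∧ ∃ y₀ : Y, ∫⁻ y, edist y₀ y ∂μ ≠ ⊤

/-- `μ ∈ P_q(Y)`: a Borel probability measure with finite `q`-th moment. -/
def MemPq {Y : Type*} [MeasurableSpace Y] [PseudoMetricSpace Y] (q : ℝ) (μ : Measure Y) : Prop :=
  IsProbabilityMeasure μ ∧ ∃ y₀ : Y, ∫⁻ y, edist y₀ y ^ q ∂μ ≠ ⊤

/-- Continuity of a measure-valued map, with respect to the Wasserstein-1 distance on its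
codomain. -/
def W1Continuous {X Y : Type*} [PseudoMetricSpace X] [MeasurableSpace Y] [PseudoMetricSpace Y]
    (f : X → Measure Y) : Prop :=
  ∀ x : X, ∀ ε : ℝ, 0 < ε → ∃ δ : ℝ, 0 < δ ∧ ∀ x' : X, dist x x' < δ →
    W1 (f x) (f x') < ENNReal.ofReal ε

/-- A feedforward neural network (multi-layer perceptron): `depth` hidden layers, layer sizes
`dims`, affine maps given by `weight` and `bias`; the activation is applied componentwise after
every affine layer except the last one. -/
structure MLP (σ : ℝ → ℝ) where
  depth : ℕ
  dims : ℕ → ℕ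
  weight : (j : ℕ) → Matrix (Fin (dims (j + 1))) (Fin (dims j)) ℝ
  bias : (j : ℕ) → Fin (dims (j + 1)) → ℝ

/-- Forward pass through the first `j` layers of the network. -/
def MLP.forward {σ : ℝ → ℝ} (net : MLP σ) :
    (j : ℕ) → (Fin (net.dims 0) → ℝ) → Fin (net.dims j) → ℝ
  | 0, x => x
  | j + 1, x => fun i =>
      let t := (∑ k, net.weight j i k * MLP.forward net j x k) + net.bias j i
      if j + 1 ≤ net.depth then σ t else t

/-- The function `ℝ^d → ℝ^N` realized by the network. -/
def MLP.realize {σ : ℝ → ℝ} (net : MLP σ) {d N : ℕ}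
    (h0 : net.dims 0 = d) (hN : net.dims (net.depth + 1) = N)
    (x : Fin d → ℝ) (i : Fin N) : ℝ :=
  net.forward (net.depth + 1) (fun k => x (Fin.cast h0 k)) (Fin.cast hN.symm i)

/-- `f : ℝ^d → ℝ^N` is realized by a network with activation `σ`, depth `J` and width
at most `W`. -/
def RealizedByNN (σ : ℝ → ℝ) {d N : ℕ} (f : (Fin d → ℝ) → Fin N → ℝ) (J W : ℕ) : Prop :=
  ∃ net : MLP σ, ∃ (h0 : net.dims 0 = d) (hN : net.dims (net.depth + 1) = N),
    net.depth = J ∧ (∀ j ≤ net.depth + 1, net.dims j ≤ W) ∧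
    ∀ x, f x = net.realize h0 hN x

/-- `f ∈ NN^σ_{d,N}`: `f` is realized by some feedforward network with activation `σ`. -/
def IsNN (σ : ℝ → ℝ) {d N : ℕ} (f : (Fin d → ℝ) → Fin N → ℝ) : Prop :=
  ∃ J W : ℕ, RealizedByNN σ f J W

/-- The softmax function `ℝ^N → Δ_N`. -/
def softmax {N : ℕ} (x : Fin N → ℝ) (n : Fin N) : ℝ :=
  Real.exp (x n) / ∑ k, Real.exp (x k)

/-- The mixture `Σ_n w_n • μ_n` of the measures `μ_n` with weights `w_n`. -/
def mixture {Y : Type*} [MeasurableSpace Y] {N : ℕ} (w : Fin N → ℝ) (μ : Fin N → Measure Y) :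
    Measure Y :=
  ∑ n, ENNReal.ofReal (w n) • μ n

/-- Membership in the standard `N`-simplex. -/
def inSimplex {N : ℕ} (lam : Fin N → ℝ) : Prop := (∀ n, 0 ≤ lam n) ∧ ∑ n, lam n = 1

/-- The Kidger–Lyons condition on an activation function: continuous, non-affine, and
differentiable at at least one point with nonzero derivative there. -/
def KidgerLyons (σ : ℝ → ℝ) : Prop :=
  Continuous σ ∧ (¬ ∃ a b : ℝ, ∀ x : ℝ, σ x = a * x + b) ∧
  ∃ x₀ : ℝ, DifferentiableAt ℝ σ x₀ ∧ deriv σ x₀ ≠ 0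

/-- The generalized inverse `ω⁻(t) = sup {s : ω s ≤ t}` of a modulus of continuity. -/
def geninv (ω : ℝ → ℝ) (t : ℝ) : ℝ := sSup {s : ℝ | ω s ≤ t}

/-- The model class `N^{σ:*}_{φ,D}`: all maps
`x ↦ Σ_{n=1}^N (Softmax_N (fh (φ x)))_n • μh_n` with `fh ∈ NN^σ_{d,N}` and `μh_n ∈ D`. -/
def InModelClass {X Y : Type*} [PseudoMetricSpace X] [MeasurableSpace Y] (σ : ℝ → ℝ)
    {d : ℕ} (φ : X → Euc d) (D : Set (Measure Y)) (F : X → Measure Y) : Prop :=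
  ∃ N : ℕ, 0 < N ∧ ∃ (fh : (Fin d → ℝ) → Fin N → ℝ) (μh : Fin N → Measure Y),
    IsNN σ fh ∧ (∀ n, μh n ∈ D) ∧
    ∀ x, F x = mixture (softmax (fh (fun i => φ x i))) μh

/-- The metric `d_∞` of uniform convergence on compacts on `C(X, P₁(Y))`, relative to the
base point `x₀` (with values in `ℝ≥0∞`). -/
def dInfty {X Y : Type*} [PseudoMetricSpace X] [MeasurableSpace Y] [PseudoMetricSpace Y]
    (x₀ : X) (f g : X → Measure Y) : ℝ≥0∞ :=
  ∑' n : ℕ, (2 : ℝ≥0∞)⁻¹ ^ (n + 1) *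
    min 1 (⨆ x ∈ Metric.closedBall x₀ ((n : ℝ) + 1), W1 (f x) (g x))

end

open MeasureTheory ENNReal in
lemma mixture_isProbability {Y : Type*} [MeasurableSpace Y] {N : ℕ}
    (w : Fin N → ℝ) (hw : ∀ n, 0 ≤ w n) (hsum : ∑ n, w n = 1)
    (μ : Fin N → Measure Y) (hμ : ∀ n, IsProbabilityMeasure (μ n)) :
    IsProbabilityMeasure (mixture w μ) := by
  constructor
  have : (mixture w μ) Set.univ = ∑ n, ENNReal.ofReal (w n) := by
    rw [mixture, Measure.finset_sum_apply]
    refine Finset.sum_congr rfl fun n _ => ?_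
    rw [Measure.smul_apply, smul_eq_mul, (hμ n).measure_univ, mul_one]
  rw [this, ← ENNReal.ofReal_sum_of_nonneg (fun n _ => hw n), hsum, ENNReal.ofReal_one]

lemma softmax_nonneg' {N : ℕ} (x : Fin N → ℝ) (n : Fin N) : 0 ≤ softmax x n :=
  div_nonneg (Real.exp_pos _).le (Finset.sum_nonneg fun k _ => (Real.exp_pos _).le)

lemma softmax_sum_one {N : ℕ} (hN : 0 < N) (x : Fin N → ℝ) : ∑ n, softmax x n = 1 := by
  have : Nonempty (Fin N) := ⟨⟨0, hN⟩⟩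
  have hpos : 0 < ∑ k, Real.exp (x k) :=
    Finset.sum_pos (fun k _ => Real.exp_pos _) Finset.univ_nonempty
  simp only [softmax]
  rw [← Finset.sum_div, div_self hpos.ne']

open MeasureTheory ENNReal in
lemma W1_integral_abs_le {Y : Type*} [MetricSpace Y] [TopologicalSpace.SeparableSpace Y]
    [MeasurableSpace Y] [BorelSpace Y]
    (μ ν : Measure Y) [IsProbabilityMeasure μ]
    (h : Y → ℝ) (hmeas : Measurable h) (Cb : ℝ) (hbd : ∀ y, |h y| ≤ Cb)
    (L : ℝ) (hL : 0 < L) (hlip : ∀ y₁ y₂, |h y₁ - h y₂| ≤ L * dist y₁ y₂)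
    (ε : ℝ) (hε : 0 < ε) (hW : W1 μ ν ≤ ENNReal.ofReal ε) :
    |(∫ y, h y ∂μ) - ∫ y, h y ∂ν| ≤ L * ε := by
  have : SecondCountableTopology Y := UniformSpace.secondCountable_of_separable Y
  have key : ∀ δ : ℝ, 0 < δ → |(∫ y, h y ∂μ) - ∫ y, h y ∂ν| ≤ L * ε + δ := by
    intro δ hδ
    have hδL : 0 < δ / L := div_pos hδ hL
    have hlt : W1 μ ν < ENNReal.ofReal (ε + δ / L) := by
      refine lt_of_le_of_lt hW ?_
      exact ENNReal.ofReal_lt_ofReal_iff_of_nonneg hε.le |>.mpr (by linarith)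
    rw [W1] at hlt
    simp only [iInf_lt_iff] at hlt
    obtain ⟨π, hπ1, hπ2, h3⟩ := hlt
    have hπprob : IsProbabilityMeasure π := by
      constructor
      have := congrArg (fun m : Measure Y => m Set.univ) hπ1
      simpa [Measure.map_apply measurable_fst MeasurableSet.univ] using this
    have hμint : (∫ y, h y ∂μ) = ∫ p : Y × Y, h p.1 ∂π := by
      rw [← hπ1, integral_map measurable_fst.aemeasurable hmeas.aestronglyMeasurable]
    have hνint : (∫ y, h y ∂ν) = ∫ p : Y × Y, h p.2 ∂π := by
      rw [← hπ2, integral_map measurable_snd.aemeasurable hmeas.aestronglyMeasurable]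
    have hi1 : Integrable (fun p : Y × Y => h p.1) π :=
      (integrable_const Cb).mono' (hmeas.comp measurable_fst).aestronglyMeasurable
        (Filter.Eventually.of_forall fun p => by simpa [Real.norm_eq_abs] using hbd p.1)
    have hi2 : Integrable (fun p : Y × Y => h p.2) π :=
      (integrable_const Cb).mono' (hmeas.comp measurable_snd).aestronglyMeasurable
        (Filter.Eventually.of_forall fun p => by simpa [Real.norm_eq_abs] using hbd p.2)
    have hdistmeas : Measurable (fun p : Y × Y => dist p.1 p.2) :=
      measurable_fst.dist measurable_snd
    have h3' : ∫⁻ p : Y × Y, ENNReal.ofReal (dist p.1 p.2) ∂π < ENNReal.ofReal (ε + δ / L) := by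
      simpa [edist_dist] using h3
    have hdint : Integrable (fun p : Y × Y => dist p.1 p.2) π := by
      refine ⟨hdistmeas.aestronglyMeasurable, ?_⟩
      rw [hasFiniteIntegral_iff_ofReal (Filter.Eventually.of_forall fun p => dist_nonneg)]
      exact lt_of_lt_of_le h3' le_top
    have h4 : |∫ p : Y × Y, (h p.1 - h p.2) ∂π| ≤ ∫ p : Y × Y, L * dist p.1 p.2 ∂π := by
      calc |∫ p : Y × Y, (h p.1 - h p.2) ∂π| ≤ ∫ p : Y × Y, |h p.1 - h p.2| ∂π := by
            simpa [Real.norm_eq_abs] using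
              norm_integral_le_integral_norm (μ := π) (fun p : Y × Y => h p.1 - h p.2)
        _ ≤ ∫ p : Y × Y, L * dist p.1 p.2 ∂π :=
            integral_mono (hi1.sub hi2).abs (hdint.const_mul L) fun p => hlip p.1 p.2
    have h5 : ∫ p : Y × Y, L * dist p.1 p.2 ∂π ≤ L * (ε + δ / L) := by
      rw [integral_const_mul]
      refine mul_le_mul_of_nonneg_left ?_ hL.le
      rw [integral_eq_lintegral_of_nonneg_ae
        (Filter.Eventually.of_forall fun p => dist_nonneg) hdistmeas.aestronglyMeasurable]
      exact ENNReal.toReal_le_of_le_ofReal (by positivity) h3'.le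
    have hLδ : L * (ε + δ / L) = L * ε + δ := by field_simp
    calc |(∫ y, h y ∂μ) - ∫ y, h y ∂ν|
        = |∫ p : Y × Y, (h p.1 - h p.2) ∂π| := by rw [hμint, hνint, integral_sub hi1 hi2]
      _ ≤ ∫ p : Y × Y, L * dist p.1 p.2 ∂π := h4
      _ ≤ L * (ε + δ / L) := h5
      _ = L * ε + δ := hLδ
  exact le_of_forall_pos_le_add key

open MeasureTheory ENNReal in
/-- **Generic conditional expectations** (Corollary 4.2): in the setting of the universal regular
conditional distribution corollary, for any Borel `g : Y × X → ℝ` uniformly Lipschitz in its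
first argument and uniformly bounded, the conditional expectation
`E[g(Y,X)|X=x] = ∫ g(y,x) dℙ^Y_x(y)` is within `M ε` of the integral of `g(·,x)` against the
learned mixture, a.s. for `x ∈ K_ε`, with `M` independent of `ε`, `K_ε`, `N` and the `μh`'s. -/
theorem statement11
    {X Y Ω : Type*} [MetricSpace X] [CompleteSpace X] [TopologicalSpace.SeparableSpace X]
    [LocallyCompactSpace X] [MeasurableSpace X] [BorelSpace X]
    [MetricSpace Y] [CompleteSpace Y] [TopologicalSpace.SeparableSpace Y]
    [MeasurableSpace Y] [BorelSpace Y]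
    [MeasurableSpace Ω] (P : Measure Ω) [IsProbabilityMeasure P]
    (RX : Ω → X) (RY : Ω → Y) (hRX : Measurable RX) (hRY : Measurable RY)
    (κ : X → Measure Y) (hκmeas : Measurable κ) (hκprob : ∀ x, IsProbabilityMeasure (κ x))
    (hκdisint : ∀ (A : Set X) (B : Set Y), MeasurableSet A → MeasurableSet B →
      P {ω | RX ω ∈ A ∧ RY ω ∈ B} = ∫⁻ x in A, κ x B ∂(P.map RX))
    (hYbdd : Bornology.IsBounded (Set.univ : Set Y))
    (hκP1 : ∀ x, MemP1 (κ x))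
    {d : ℕ} (σ : ℝ → ℝ) (hσ : KidgerLyons σ)
    (φ : X → Euc d) (hφc : Continuous φ) (hφinj : Function.Injective φ)
    -- the integrand: Borel, uniformly Lipschitz in its first argument, uniformly bounded
    (g : Y × X → ℝ) (hgmeas : Measurable g)
    (L : ℝ) (hL : 0 < L)
    (hgLip : ∀ (x : X) (y₁ y₂ : Y), |g (y₁, x) - g (y₂, x)| ≤ L * dist y₁ y₂)
    (hgBdd : ∃ Cb : ℝ, ∀ (y : Y) (x : X), |g (y, x)| ≤ Cb) :
    ∃ M : ℝ, 0 < M ∧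
      ∀ ε : ℝ, 0 < ε → ε < 1 →
        ∀ K : Set X, IsCompact K → 1 - ENNReal.ofReal ε ≤ P.map RX K →
          ∀ N : ℕ, 0 < N →
            ∀ μh : Fin N → Measure Y, (∀ n, MemP1 (μh n)) →
              ∀ fh : (Fin d → ℝ) → Fin N → ℝ, IsNN σ fh →
                (∀ x ∈ K, W1 (κ x) (mixture (softmax (fh (fun i => φ x i))) μh)
                  ≤ ENNReal.ofReal ε) →
                ∀ᵐ x ∂(P.map RX), x ∈ K →
                  |(∫ y, g (y, x) ∂(κ x)) -
                      (∫ y, g (y, x) ∂(mixture (softmax (fh (fun i => φ x i))) μh))|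
                    ≤ M * ε := by
  obtain ⟨Cb, hCb⟩ := hgBdd
  refine ⟨L, hL, fun ε hε hε1 K hK hKP N hN μh hμh fh hfh hW => ?_⟩
  refine Filter.Eventually.of_forall fun x hx => ?_
  have hκx := hκprob x
  have hmix : IsProbabilityMeasure (mixture (softmax (fh (fun i => φ x i))) μh) :=
    mixture_isProbability _ (softmax_nonneg' _) (softmax_sum_one hN _) _ (fun n => (hμh n).1)
  exact W1_integral_abs_le (κ x) (mixture (softmax (fh (fun i => φ x i))) μh)
    (fun y => g (y, x)) (hgmeas.comp (measurable_id.prodMk measurable_const))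
    Cb (fun y => hCb y x) L hL (fun y₁ y₂ => hgLip x y₁ y₂) ε hε (hW x hx)
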